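/- Let p,q be odd primes with p ≥ q, and α uniform in (Z_{pq})^*. Define Z_α = {σ ∈ {(1−q)/2,...,(q−1)/2} : ασ mod pq lies in (−q,q) mod pq}. Then E_α[|Z_α|] ≤ C·(1 + q/p) for an absolute constant C. -/

import Mathlib

/-- There is an absolute constant `C` such that for all odd primes `p ≥ q`, if
`α` is uniform in `(Z_{pq})^*` and
`Z_α = {σ ∈ {(1-q)/2,…,(q-1)/2} : (ασ mod pq) < q or (ασ mod pq) > pq - q}`,
then `E_α[|Z_α|] ≤ C·(1 + q/p)`. -/
theorem stmt17 :
    ∃ C : ℝ, 0 < C ∧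
      ∀ (p q : ℕ) [NeZero (p * q)],
        p.Prime → q.Prime → Odd p → Odd q → q ≤ p →
        (∑ α : (ZMod (p * q))ˣ,
            (((Finset.Icc ((1 - (q : ℤ)) / 2) (((q : ℤ) - 1) / 2)).filter
                (fun σ : ℤ =>
                  ((α : ZMod (p * q)) * (σ : ZMod (p * q))).val < q ∨
                    p * q - q < ((α : ZMod (p * q)) * (σ : ZMod (p * q))).val)).card : ℝ)) /
          (Fintype.card (ZMod (p * q))ˣ : ℝ)
          ≤ C * (1 + (q : ℝ) / (p : ℝ)) := by
  refine ⟨5, by norm_num, ?_⟩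
  intro p q _ hp hq hop hoq hqp
  have hq3 : 3 ≤ q := by
    rcases hq.two_le.lt_or_eq with h | h
    · omega
    · exfalso; exact (Nat.odd_iff.mp hoq).symm.trans_ne (by omega) rfl
  have hp3 : 3 ≤ p := le_trans hq3 hqp
  set n := p * q with hn
  have hqn : q ≤ n := Nat.le_mul_of_pos_left q (by omega)
  set S := Finset.Icc ((1 - (q : ℤ)) / 2) (((q : ℤ) - 1) / 2) with hS
  set U := (ZMod n)ˣ
  set E := Fintype.card (ZMod n)ˣ with hE
  -- number of "bad" residues is at most 2q
  have key_count :
      (Finset.univ.filter (fun x : ZMod n => x.val < q ∨ p * q - q < x.val)).card ≤ 2 * q := by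
    have h1 : (Finset.univ.filter (fun x : ZMod n => x.val < q)).card ≤ q := by
      have := Finset.card_le_card_of_injOn (s := Finset.univ.filter (fun x : ZMod n => x.val < q))
        (t := Finset.range q) (fun x => x.val)
        (fun x hx => Finset.mem_range.mpr (Finset.mem_filter.mp hx).2)
        (fun a _ b _ h => ZMod.val_injective n h)
      simpa using this
    have h2 : (Finset.univ.filter (fun x : ZMod n => p * q - q < x.val)).card ≤ q := by
      have := Finset.card_le_card_of_injOn
        (s := Finset.univ.filter (fun x : ZMod n => p * q - q < x.val))
        (t := Finset.Ico (n - q) n) (fun x => x.val)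
        (fun x hx => Finset.mem_Ico.mpr ⟨le_of_lt (Finset.mem_filter.mp hx).2, ZMod.val_lt x⟩)
        (fun a _ b _ h => ZMod.val_injective n h)
      have hc : (Finset.Ico (n - q) n).card = q := by
        rw [Nat.card_Ico]; omega
      omega
    calc (Finset.univ.filter (fun x : ZMod n => x.val < q ∨ p * q - q < x.val)).card
        ≤ (Finset.univ.filter (fun x : ZMod n => x.val < q)).card +
          (Finset.univ.filter (fun x : ZMod n => p * q - q < x.val)).card := by
          rw [Finset.filter_or]; exact Finset.card_union_le _ _
      _ ≤ 2 * q := by omega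
  -- nonzero σ in the interval are units mod n
  have hunit : ∀ σ : ℤ, σ ∈ S → σ ≠ 0 → IsUnit ((σ : ZMod n)) := by
    intro σ hσ hσ0
    rw [hS, Finset.mem_Icc] at hσ
    have habs : 0 < σ.natAbs ∧ σ.natAbs < q := by
      obtain ⟨k, hk⟩ := hoq
      omega
    have hcop : Nat.Coprime σ.natAbs n := by
      have hcp : Nat.Coprime σ.natAbs p := by
        rcases (Nat.coprime_or_dvd_of_prime hp σ.natAbs) with h | h
        · exact h.symm
        · exfalso; have := Nat.le_of_dvd habs.1 h; omega
      have hcq : Nat.Coprime σ.natAbs q := by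
        rcases (Nat.coprime_or_dvd_of_prime hq σ.natAbs) with h | h
        · exact h.symm
        · exfalso; have := Nat.le_of_dvd habs.1 h; omega
      exact Nat.Coprime.mul_right hcp hcq
    have hu : IsUnit ((σ.natAbs : ZMod n)) := (ZMod.isUnit_iff_coprime _ _).mpr hcop
    rcases Int.natAbs_eq σ with h | h
    · rw [h, Int.cast_natCast]; exact hu
    · rw [h, Int.cast_neg, Int.cast_natCast]; exact hu.neg
  -- for each nonzero σ the count of bad α is at most 2q
  have key1 : ∀ σ ∈ S, σ ≠ 0 →
      (Finset.univ.filter (fun α : U =>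
        ((α : ZMod n) * (σ : ZMod n)).val < q ∨
          p * q - q < ((α : ZMod n) * (σ : ZMod n)).val)).card ≤ 2 * q := by
    intro σ hσ hσ0
    have hu := hunit σ hσ hσ0
    refine le_trans (Finset.card_le_card_of_injOn
      (fun α : U => (α : ZMod n) * (σ : ZMod n)) ?_ ?_) key_count
    · intro α hα
      rw [Finset.mem_coe, Finset.mem_filter] at hα ⊢
      exact ⟨Finset.mem_univ _, hα.2⟩
    · intro a _ b _ h
      exact Units.ext (hu.mul_right_cancel h)
  -- swap the sums
  have hswap : (∑ α : U, (S.filter (fun σ : ℤ =>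
        ((α : ZMod n) * (σ : ZMod n)).val < q ∨
          p * q - q < ((α : ZMod n) * (σ : ZMod n)).val)).card)
      = ∑ σ ∈ S, (Finset.univ.filter (fun α : U =>
        ((α : ZMod n) * (σ : ZMod n)).val < q ∨
          p * q - q < ((α : ZMod n) * (σ : ZMod n)).val)).card := by
    simp_rw [Finset.card_filter]
    exact Finset.sum_comm
  have h0S : (0 : ℤ) ∈ S := by
    rw [hS, Finset.mem_Icc]
    obtain ⟨k, hk⟩ := hoq
    omega
  have hcardS : S.card = q := by
    rw [hS, Int.card_Icc]
    obtain ⟨k, hk⟩ := hoq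
    omega
  set f : ℤ → ℕ := fun σ => (Finset.univ.filter (fun α : U =>
        ((α : ZMod n) * (σ : ZMod n)).val < q ∨
          p * q - q < ((α : ZMod n) * (σ : ZMod n)).val)).card with hf
  have hsum : ∑ σ ∈ S, f σ ≤ E + q * (2 * q) := by
    rw [← Finset.add_sum_erase S f h0S]
    have hA : f 0 ≤ E := by
      rw [hf]
      exact le_trans (Finset.card_filter_le _ _) (le_of_eq (Finset.card_univ))
    have hB : ∑ σ ∈ S.erase 0, f σ ≤ (S.erase 0).card • (2 * q) :=
      Finset.sum_le_card_nsmul _ _ _ (fun σ hσ =>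
        key1 σ (Finset.mem_of_mem_erase hσ) (Finset.ne_of_mem_erase hσ))
    have hC : (S.erase 0).card ≤ q := le_trans (Finset.card_erase_le) (le_of_eq hcardS)
    simp only [smul_eq_mul] at hB
    have := Nat.mul_le_mul_right (2 * q) hC
    omega
  have hT : (∑ α : U, (S.filter (fun σ : ℤ =>
        ((α : ZMod n) * (σ : ZMod n)).val < q ∨
          p * q - q < ((α : ZMod n) * (σ : ZMod n)).val)).card) ≤ E + 2 * q * q := by
    rw [hswap]
    calc _ ≤ E + q * (2 * q) := hsum
      _ = E + 2 * q * q := by ring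
  -- totient lower bound : 4pq ≤ 9E
  have hEtot : E = n.totient := ZMod.card_units_eq_totient n
  have h9 : 4 * p * q ≤ 9 * E := by
    rw [hEtot]
    rcases eq_or_ne p q with h | h
    · subst h
      rw [hn, Nat.totient_mul_of_prime_of_dvd hp dvd_rfl, Nat.totient_prime hp]
      obtain ⟨a, rfl⟩ : ∃ a, p = a + 3 := ⟨p - 3, by omega⟩
      have ha : a + 3 - 1 = a + 2 := by omega
      rw [ha]; nlinarith
    · rw [hn, Nat.totient_mul ((Nat.coprime_primes hp hq).mpr h),
        Nat.totient_prime hp, Nat.totient_prime hq]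
      obtain ⟨a, rfl⟩ : ∃ a, p = a + 3 := ⟨p - 3, by omega⟩
      obtain ⟨b, rfl⟩ : ∃ b, q = b + 3 := ⟨q - 3, by omega⟩
      have ha : a + 3 - 1 = a + 2 := by omega
      have hb : b + 3 - 1 = b + 2 := by omega
      rw [ha, hb]; nlinarith
  have hE0 : 0 < E := Fintype.card_pos
  -- final real-number computation
  have hp0 : (0 : ℝ) < p := by positivity
  have hq0 : (0 : ℝ) < q := by positivity
  have hE0' : (0 : ℝ) < E := by exact_mod_cast hE0
  rw [div_le_iff₀ hE0']
  have hTR : (∑ α : (ZMod n)ˣ,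
      ((S.filter (fun σ : ℤ =>
            ((α : ZMod n) * (σ : ZMod n)).val < q ∨
              p * q - q < ((α : ZMod n) * (σ : ZMod n)).val)).card : ℝ))
      ≤ (E : ℝ) + 2 * q * q := by
    rw [← Nat.cast_sum]
    exact_mod_cast hT
  have h9' : (4 : ℝ) * p * q ≤ 9 * E := by exact_mod_cast h9
  refine le_trans hTR ?_
  rw [show (5:ℝ) * (1 + (q:ℝ)/p) * (E:ℝ) = (5*((p:ℝ)+q)*E)/p by field_simp,
    le_div_iff₀ hp0]
  nlinarith [mul_le_mul_of_nonneg_left h9' hq0.le, mul_nonneg hp0.le hE0'.le,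
    mul_nonneg hq0.le hE0'.le]
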